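/- arXiv:1301.5334 — 2 statements merged into one kernel-verified Lean document; each statement's English description precedes it below -/
import Mathlib

section
/- If f : 2^S → ℝ≥0 is modular (f(S_1)+f(S_2) = f(S_1∪S_2)+f(S_1∩S_2) for all S_1,S_2 ⊆ S), then for any subsets S_1,...,S_K of S and any nonempty U ⊆ [K], ∑_{k∈U} f(S_k) = ∑_{r=1}^{|U|} f(S^{(r)}(U)). -/
open Finset

/-- `cutOp S U r` is `S^{(r)}(U) = ⋃_{U' ⊆ U, |U'| = r} ⋂_{k ∈ U'} S_k`. -/
def cutOp {α : Type*} [Fintype α] [DecidableEq α] (S : ℕ → Finset α) (U : Finset ℕ)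
    (r : ℕ) : Finset α :=
  (U.powersetCard r).sup fun V => V.inf S

lemma cutOp_zero {α : Type*} [Fintype α] [DecidableEq α] (S : ℕ → Finset α) (U : Finset ℕ) :
    cutOp S U 0 = Finset.univ := by
  simp [cutOp]

lemma cutOp_top {α : Type*} [Fintype α] [DecidableEq α] (S : ℕ → Finset α) (U : Finset ℕ) :
    cutOp S U (U.card + 1) = ∅ := by
  simp [cutOp, Finset.powersetCard_eq_empty]

lemma cutOp_succ_subset {α : Type*} [Fintype α] [DecidableEq α] (S : ℕ → Finset α)
    (U : Finset ℕ) (r : ℕ) : cutOp S U (r + 1) ⊆ cutOp S U r := by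
  rw [← Finset.le_iff_subset, cutOp]
  apply Finset.sup_le
  intro V hV
  rw [mem_powersetCard] at hV
  obtain ⟨hVU, hcard⟩ := hV
  obtain ⟨W, hWV, hW⟩ := Finset.exists_subset_card_eq (s := V) (n := r) (by omega)
  exact le_trans (Finset.inf_mono hWV)
    (Finset.le_sup (mem_powersetCard.mpr ⟨hWV.trans hVU, hW⟩))

lemma cutOp_insert {α : Type*} [Fintype α] [DecidableEq α] (S : ℕ → Finset α)
    (U : Finset ℕ) {j : ℕ} (hj : j ∉ U) (r : ℕ) :
    cutOp S (insert j U) (r + 1) = cutOp S U (r + 1) ∪ (S j ∩ cutOp S U r) := by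
  rw [cutOp, powersetCard_succ_insert hj, Finset.sup_union, Finset.sup_image]
  congr 1
  have : (U.powersetCard r).sup ((fun V => V.inf S) ∘ insert j)
      = S j ⊓ cutOp S U r := by
    rw [cutOp, Finset.sup_inf_distrib_left]
    apply Finset.sup_congr rfl
    intro V _
    simp only [Function.comp_apply, Finset.inf_insert]
  rw [this, Finset.inf_eq_inter]

lemma modular_aux {α : Type*} [Fintype α] [DecidableEq α]
    (f : Finset α → ℝ)
    (hf : ∀ A B : Finset α, f A + f B = f (A ∪ B) + f (A ∩ B))
    (S : ℕ → Finset α) (U : Finset ℕ) :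
    ∑ k ∈ U, f (S k) = ∑ r ∈ Finset.Icc 1 U.card, f (cutOp S U r) := by
  induction U using Finset.induction_on with
  | empty => simp
  | @insert j U hj IH =>
    set n := U.card with hn
    have hcard : (insert j U).card = n + 1 := Finset.card_insert_of_notMem hj
    set A : ℕ → Finset α := fun r => cutOp S U r with hA
    set g : ℕ → ℝ := fun r => f (S j ∩ A r) with hg
    have key : ∀ r : ℕ, f (cutOp S (insert j U) (r + 1))
        = f (A (r + 1)) + (g r - g (r + 1)) := by
      intro r
      rw [cutOp_insert S U hj r]
      have hsub : A (r + 1) ⊆ A r := cutOp_succ_subset S U r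
      have hmod := hf (A (r + 1)) (S j ∩ A r)
      have hint : A (r + 1) ∩ (S j ∩ A r) = S j ∩ A (r + 1) := by
        rw [Finset.inter_comm (S j) (A r), ← Finset.inter_assoc,
          Finset.inter_eq_left.mpr hsub, Finset.inter_comm]
      rw [hint] at hmod
      simp only [hg]
      linarith
    rw [Finset.sum_insert hj, IH, hcard]
    have h1 : ∑ r ∈ Finset.Icc 1 (n + 1), f (cutOp S (insert j U) r)
        = ∑ i ∈ Finset.range (n + 1), f (cutOp S (insert j U) (i + 1)) := by
      rw [← Finset.Ico_add_one_right_eq_Icc, Finset.sum_Ico_eq_sum_range]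
      simp [add_comm]
    have h2 : ∑ r ∈ Finset.Icc 1 n, f (A r)
        = ∑ i ∈ Finset.range n, f (A (i + 1)) := by
      rw [← Finset.Ico_add_one_right_eq_Icc, Finset.sum_Ico_eq_sum_range]
      simp [add_comm]
    rw [h1]
    simp only [key]
    rw [Finset.sum_add_distrib, Finset.sum_range_sub' g (n + 1)]
    have hg0 : g 0 = f (S j) := by simp [hg, hA, cutOp_zero]
    have hgn : g (n + 1) = f (∅ : Finset α) := by simp [hg, hA, hn, cutOp_top]
    have hAn : f (A (n + 1)) = f (∅ : Finset α) := by simp [hA, hn, cutOp_top]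
    rw [Finset.sum_range_succ, hAn, hg0, hgn, h2]
    ring

theorem modular_multiway {α : Type*} [Fintype α] [DecidableEq α] (K : ℕ)
    (f : Finset α → ℝ) (hf0 : ∀ A, 0 ≤ f A)
    (hf : ∀ A B : Finset α, f A + f B = f (A ∪ B) + f (A ∩ B))
    (S : ℕ → Finset α) (U : Finset ℕ) (hU : U ⊆ Finset.Icc 1 K) (hne : U.Nonempty) :
    ∑ k ∈ U, f (S k) = ∑ r ∈ Finset.Icc 1 U.card, f (cutOp S U r) := by
  exact modular_aux f hf S U
end

section
/- Let f : 2^S → ℝ≥0 be modular, and let S_1,...,S_K ⊆ S. Let U and T = {t_1 < ⋯ < t_{|T|}} be nonempty subsets of [K], and let q ∈ [|U|], r_q ∈ [|T|] satisfy S^{(q)}(U) ⊆ S^{(r_q)}(T). Then ∑_{r=1}^{|T|} f(S_{t_r}) + r_q · f(S^{(q)}(U)) = ∑_{r=1}^{r_q} ( f(S^{(r)}(T)) + f(S_{t_r} ∩ S^{(q)}(U)) ) + ∑_{r=r_q+1}^{|T|} f( S_{t_r} ∩ ( S^{(q)}(U) ∪ S^{(r_q+1)}({t_1,...,t_r}) )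 ). -/
open Finset

lemma mem_cutOp_iff {α : Type*} [Fintype α] [DecidableEq α]
    (S : ℕ → Finset α) (U : Finset ℕ) (r : ℕ) (x : α) :
    x ∈ cutOp S U r ↔ r ≤ (U.filter fun k => x ∈ S k).card := by
  simp only [cutOp, Finset.mem_sup, Finset.mem_powersetCard]
  constructor
  · rintro ⟨V, ⟨hVU, hVc⟩, hx⟩
    rw [Finset.mem_inf] at hx
    calc r = V.card := hVc.symm
    _ ≤ _ := Finset.card_le_card (fun k hk => Finset.mem_filter.2 ⟨hVU hk, hx k hk⟩)
  · intro h
    obtain ⟨V, hV, hVc⟩ := Finset.exists_subset_card_eq h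
    exact ⟨V, ⟨hV.trans (Finset.filter_subset _ _), hVc⟩,
      Finset.mem_inf.2 fun i hi => (Finset.mem_filter.1 (hV hi)).2⟩

lemma modular_rep {α : Type*} [DecidableEq α] (f : Finset α → ℝ)
    (hf : ∀ A B : Finset α, f A + f B = f (A ∪ B) + f (A ∩ B)) (A : Finset α) :
    f A = f ∅ + ∑ x ∈ A, (f {x} - f ∅) := by
  induction A using Finset.induction_on with
  | empty => simp
  | @insert a A ha ih =>
    have h := hf A {a}
    rw [Finset.union_comm, ← Finset.insert_eq,
      Finset.inter_comm, Finset.singleton_inter_of_notMem ha] at h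
    rw [Finset.sum_insert ha]
    have : f (insert a A) = f A + f {a} - f ∅ := by linarith
    rw [this, ih]; ring

lemma sum_f_eq {α : Type*} [Fintype α] [DecidableEq α] (f : Finset α → ℝ)
    (hf : ∀ A B : Finset α, f A + f B = f (A ∪ B) + f (A ∩ B))
    {ι : Type*} (s : Finset ι) (B : ι → Finset α) [DecidableEq ι] :
    ∑ i ∈ s, f (B i)
      = (s.card : ℝ) * f ∅
        + ∑ x ∈ Finset.univ, ((s.filter fun i => x ∈ B i).card : ℝ) * (f {x} - f ∅) := by
  have : ∀ i ∈ s, f (B i) = f ∅ + ∑ x ∈ Finset.univ, if x ∈ B i then (f {x} - f ∅) else 0 := by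
    intro i _
    rw [modular_rep f hf (B i)]
    congr 1
    rw [Finset.sum_ite_mem, Finset.univ_inter]
  rw [Finset.sum_congr rfl this, Finset.sum_add_distrib, Finset.sum_const, Finset.sum_comm]
  congr 1
  · rw [nsmul_eq_mul]
  · refine Finset.sum_congr rfl fun x _ => ?_
    rw [← Finset.sum_filter, Finset.sum_const, nsmul_eq_mul]

lemma count_ge (d n : ℕ) : ((Finset.Icc 1 n).filter fun r => r ≤ d).card = min d n := by
  have : ((Finset.Icc 1 n).filter fun r => r ≤ d) = Finset.Icc 1 (min d n) := by
    ext r; simp only [Finset.mem_filter, Finset.mem_Icc]; omega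
  rw [this, Nat.card_Icc]; omega

lemma count_level (p : ℕ → Prop) [DecidablePred p] (m : ℕ) (n : ℕ) :
    ((Finset.Icc 1 n).filter fun r => p r ∧ m + 1 ≤ ((Finset.Icc 1 r).filter p).card).card
      = ((Finset.Icc 1 n).filter p).card - min ((Finset.Icc 1 n).filter p).card m := by
  induction n with
  | zero => simp
  | succ n ih =>
    have hins : Finset.Icc 1 (n+1) = insert (n+1) (Finset.Icc 1 n) := by
      ext r; simp only [Finset.mem_insert, Finset.mem_Icc]; omega
    have hnm : (n+1) ∉ Finset.Icc 1 n := by simp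
    have hnm2 : ∀ (q : ℕ → Prop) (_ : DecidablePred q), (n+1) ∉ (Finset.Icc 1 n).filter q :=
      fun q _ h => hnm (Finset.mem_of_mem_filter _ h)
    have hD : ((Finset.Icc 1 (n+1)).filter p).card
        = ((Finset.Icc 1 n).filter p).card + (if p (n+1) then 1 else 0) := by
      rw [hins, Finset.filter_insert]
      by_cases hp : p (n+1)
      · rw [if_pos hp, if_pos hp, Finset.card_insert_of_notMem (hnm2 p _)]
      · rw [if_neg hp, if_neg hp, Nat.add_zero]
    have hL : ((Finset.Icc 1 (n+1)).filter
          fun r => p r ∧ m + 1 ≤ ((Finset.Icc 1 r).filter p).card).card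
        = ((Finset.Icc 1 n).filter
            fun r => p r ∧ m + 1 ≤ ((Finset.Icc 1 r).filter p).card).card
          + (if p (n+1) ∧ m + 1 ≤ ((Finset.Icc 1 (n+1)).filter p).card then 1 else 0) := by
      conv_lhs => rw [hins, Finset.filter_insert]
      by_cases hc : p (n+1) ∧ m + 1 ≤ ((Finset.Icc 1 (n+1)).filter p).card
      · rw [if_pos hc, if_pos hc, Finset.card_insert_of_notMem (hnm2 _ _)]
      · rw [if_neg hc, if_neg hc]; simp
    rw [hL, hD, ih]
    by_cases hp : p (n+1)
    · simp only [hp, if_true, true_and]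
      by_cases hm : m + 1 ≤ ((Finset.Icc 1 n).filter p).card + 1
      · rw [if_pos hm]; omega
      · rw [if_neg hm]; omega
    · simp only [hp, if_false, false_and]; omega

lemma card_filter_image_eq (t : ℕ → ℕ) (s : Finset ℕ) (hinj : Set.InjOn t s)
    (p : ℕ → Prop) [DecidablePred p] :
    ((s.image t).filter p).card = (s.filter fun j => p (t j)).card := by
  rw [Finset.filter_image]
  exact Finset.card_image_of_injOn (hinj.mono (Finset.coe_subset.2 (Finset.filter_subset _ s)))

theorem lemma2_modular {α : Type*} [Fintype α] [DecidableEq α] (K : ℕ)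
    (f : Finset α → ℝ) (hf0 : ∀ A, 0 ≤ f A)
    (hf : ∀ A B : Finset α, f A + f B = f (A ∪ B) + f (A ∩ B))
    (S : ℕ → Finset α) (U T : Finset ℕ)
    (hU : U ⊆ Finset.Icc 1 K) (hT : T ⊆ Finset.Icc 1 K)
    (hUne : U.Nonempty) (hTne : T.Nonempty)
    (t : ℕ → ℕ) (ht : StrictMonoOn t (Set.Icc 1 T.card))
    (himg : (Finset.Icc 1 T.card).image t = T)
    (q rq : ℕ) (hq1 : 1 ≤ q) (hq2 : q ≤ U.card) (hrq1 : 1 ≤ rq) (hrq2 : rq ≤ T.card)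
    (hsub : cutOp S U q ⊆ cutOp S T rq) :
    ∑ r ∈ Finset.Icc 1 T.card, f (S (t r)) + (rq : ℝ) * f (cutOp S U q)
    = ∑ r ∈ Finset.Icc 1 rq, (f (cutOp S T r) + f (S (t r) ∩ cutOp S U q))
      + ∑ r ∈ Finset.Icc (rq + 1) T.card,
          f (S (t r) ∩ (cutOp S U q ∪ cutOp S ((Finset.Icc 1 r).image t) (rq + 1))) := by
  classical
  set n := T.card with hn
  set A := cutOp S U q with hA
  have hinj : Set.InjOn t ↑(Finset.Icc 1 n) := by
    rw [Finset.coe_Icc]; exact ht.injOn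
  have hTd : ∀ x : α, (T.filter fun k => x ∈ S k).card
      = ((Finset.Icc 1 n).filter fun r => x ∈ S (t r)).card := by
    intro x
    rw [← himg, card_filter_image_eq t _ hinj]
  have hPr : ∀ (r : ℕ), r ≤ n → ∀ x : α,
      (((Finset.Icc 1 r).image t).filter fun k => x ∈ S k).card
        = ((Finset.Icc 1 r).filter fun j => x ∈ S (t j)).card := by
    intro r hr x
    refine card_filter_image_eq t _ (hinj.mono ?_) _
    exact_mod_cast Finset.Icc_subset_Icc_right hr
  have hsplit : ∀ (pp : ℕ → Prop) (_ : DecidablePred pp),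
      ((Finset.Icc 1 n).filter pp).card
        = ((Finset.Icc 1 rq).filter pp).card + ((Finset.Icc (rq+1) n).filter pp).card := by
    intro pp _
    have hu : Finset.Icc 1 n = Finset.Icc 1 rq ∪ Finset.Icc (rq+1) n := by
      ext r; simp only [Finset.mem_union, Finset.mem_Icc]; omega
    rw [hu, Finset.filter_union, Finset.card_union_of_disjoint]
    refine Finset.disjoint_filter_filter ?_
    rw [Finset.disjoint_left]
    intro a ha hb
    simp only [Finset.mem_Icc] at ha hb
    omega
  have key : ∀ x : α,
      ((Finset.Icc 1 n).filter fun r => x ∈ S (t r)).card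
        + ((Finset.Icc 1 rq).filter fun _ => x ∈ A).card
      = ((Finset.Icc 1 rq).filter fun r => x ∈ cutOp S T r).card
        + ((Finset.Icc 1 rq).filter fun r => x ∈ S (t r) ∩ A).card
        + ((Finset.Icc (rq+1) n).filter fun r =>
            x ∈ S (t r) ∩ (A ∪ cutOp S ((Finset.Icc 1 r).image t) (rq+1))).card := by
    intro x
    have hmemT : ∀ r, (x ∈ cutOp S T r) ↔
        r ≤ ((Finset.Icc 1 n).filter fun j => x ∈ S (t j)).card := by
      intro r; rw [mem_cutOp_iff, hTd x]
    have hmemP : ∀ r, r ≤ n → ((x ∈ cutOp S ((Finset.Icc 1 r).image t) (rq+1)) ↔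
        rq + 1 ≤ ((Finset.Icc 1 r).filter fun j => x ∈ S (t j)).card) := by
      intro r hr; rw [mem_cutOp_iff, hPr r hr x]
    set d := ((Finset.Icc 1 n).filter fun j => x ∈ S (t j)).card with hd
    by_cases hx : x ∈ A
    · have hdrq : rq ≤ d := (hmemT rq).1 (hsub hx)
      have e2 : ((Finset.Icc 1 rq).filter fun _ => x ∈ A).card = rq := by
        rw [Finset.filter_true_of_mem (fun _ _ => hx), Nat.card_Icc]; omega
      have e3 : ((Finset.Icc 1 rq).filter fun r => x ∈ cutOp S T r).card = rq := by
        rw [Finset.filter_true_of_mem, Nat.card_Icc]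
        · omega
        · intro r hr; rw [hmemT]; simp only [Finset.mem_Icc] at hr; omega
      have e4 : ((Finset.Icc 1 rq).filter fun r => x ∈ S (t r) ∩ A).card
          = ((Finset.Icc 1 rq).filter fun j => x ∈ S (t j)).card := by
        apply congrArg
        apply Finset.filter_congr
        intro r _; simp [hx]
      have e5 : ((Finset.Icc (rq+1) n).filter fun r =>
            x ∈ S (t r) ∩ (A ∪ cutOp S ((Finset.Icc 1 r).image t) (rq+1))).card
          = ((Finset.Icc (rq+1) n).filter fun j => x ∈ S (t j)).card := by
        apply congrArg
        apply Finset.filter_congr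
        intro r _; simp [hx]
      rw [e2, e3, e4, e5]
      have hs := hsplit (fun j => x ∈ S (t j)) inferInstance
      omega
    · have e2 : ((Finset.Icc 1 rq).filter fun _ => x ∈ A).card = 0 := by
        rw [Finset.filter_false_of_mem (fun _ _ => hx), Finset.card_empty]
      have e4 : ((Finset.Icc 1 rq).filter fun r => x ∈ S (t r) ∩ A).card = 0 := by
        rw [Finset.filter_false_of_mem, Finset.card_empty]
        intro r _ hc
        exact hx (Finset.mem_inter.1 hc).2
      have e3 : ((Finset.Icc 1 rq).filter fun r => x ∈ cutOp S T r).card = min d rq := by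
        have he : ((Finset.Icc 1 rq).filter fun r => x ∈ cutOp S T r)
            = ((Finset.Icc 1 rq).filter fun r => r ≤ d) := by
          apply Finset.filter_congr
          intro r _; simp only [hmemT r, ← hd]
        rw [he, count_ge]
      have e5 : ((Finset.Icc (rq+1) n).filter fun r =>
            x ∈ S (t r) ∩ (A ∪ cutOp S ((Finset.Icc 1 r).image t) (rq+1))).card
          = d - min d rq := by
        have h1 : ((Finset.Icc (rq+1) n).filter fun r =>
              x ∈ S (t r) ∩ (A ∪ cutOp S ((Finset.Icc 1 r).image t) (rq+1)))
            = ((Finset.Icc (rq+1) n).filter fun r =>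
                (x ∈ S (t r)) ∧ rq + 1 ≤ ((Finset.Icc 1 r).filter fun j => x ∈ S (t j)).card) := by
          apply Finset.filter_congr
          intro r hr
          simp only [Finset.mem_Icc] at hr
          rw [Finset.mem_inter, Finset.mem_union, hmemP r hr.2]
          simp [hx]
        have h2 : ((Finset.Icc 1 rq).filter fun r =>
            (x ∈ S (t r)) ∧ rq + 1 ≤ ((Finset.Icc 1 r).filter fun j => x ∈ S (t j)).card).card
              = 0 := by
          rw [Finset.card_eq_zero, Finset.filter_eq_empty_iff]
          intro r hr hcon
          obtain ⟨-, hcard⟩ := hcon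
          have hle : ((Finset.Icc 1 r).filter fun j => x ∈ S (t j)).card ≤ r :=
            le_trans (Finset.card_filter_le _ _) (by rw [Nat.card_Icc]; omega)
          simp only [Finset.mem_Icc] at hr
          omega
        have h3 := count_level (fun j => x ∈ S (t j)) rq n
        have h4 := hsplit (fun r =>
          (x ∈ S (t r)) ∧ rq + 1 ≤ ((Finset.Icc 1 r).filter fun j => x ∈ S (t j)).card)
          inferInstance
        rw [h1]
        omega
      rw [e2, e3, e4, e5]
      omega
  have hsum2 : (rq : ℝ) * f A = ∑ _r ∈ Finset.Icc 1 rq, f A := by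
    rw [Finset.sum_const, Nat.card_Icc, Nat.add_sub_cancel, nsmul_eq_mul]
  rw [hsum2, Finset.sum_add_distrib]
  rw [sum_f_eq f hf (Finset.Icc 1 n) (fun r => S (t r)),
      sum_f_eq f hf (Finset.Icc 1 rq) (fun _ => A),
      sum_f_eq f hf (Finset.Icc 1 rq) (fun r => cutOp S T r),
      sum_f_eq f hf (Finset.Icc 1 rq) (fun r => S (t r) ∩ A),
      sum_f_eq f hf (Finset.Icc (rq+1) n)
        (fun r => S (t r) ∩ (A ∪ cutOp S ((Finset.Icc 1 r).image t) (rq+1)))]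
  have hc1 : (Finset.Icc 1 n).card = n := by rw [Nat.card_Icc]; omega
  have hc2 : (Finset.Icc 1 rq).card = rq := by rw [Nat.card_Icc]; omega
  have hc3 : (Finset.Icc (rq+1) n).card = n - rq := by rw [Nat.card_Icc]; omega
  rw [hc1, hc2, hc3, Nat.cast_sub hrq2]
  have hSig : ∑ x ∈ Finset.univ,
        (((Finset.Icc 1 n).filter fun r => x ∈ S (t r)).card : ℝ) * (f {x} - f ∅)
      + ∑ x ∈ Finset.univ,
        (((Finset.Icc 1 rq).filter fun _ => x ∈ A).card : ℝ) * (f {x} - f ∅)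
      = (∑ x ∈ Finset.univ,
          (((Finset.Icc 1 rq).filter fun r => x ∈ cutOp S T r).card : ℝ) * (f {x} - f ∅)
        + ∑ x ∈ Finset.univ,
          (((Finset.Icc 1 rq).filter fun r => x ∈ S (t r) ∩ A).card : ℝ) * (f {x} - f ∅))
        + ∑ x ∈ Finset.univ,
          (((Finset.Icc (rq+1) n).filter fun r =>
            x ∈ S (t r) ∩ (A ∪ cutOp S ((Finset.Icc 1 r).image t) (rq+1))).card : ℝ)
              * (f {x} - f ∅) := by
    rw [← Finset.sum_add_distrib, ← Finset.sum_add_distrib, ← Finset.sum_add_distrib]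
    refine Finset.sum_congr rfl fun x _ => ?_
    have hk : (((Finset.Icc 1 n).filter fun r => x ∈ S (t r)).card : ℝ)
        + ((Finset.Icc 1 rq).filter fun _ => x ∈ A).card
        = ((Finset.Icc 1 rq).filter fun r => x ∈ cutOp S T r).card
          + ((Finset.Icc 1 rq).filter fun r => x ∈ S (t r) ∩ A).card
          + ((Finset.Icc (rq+1) n).filter fun r =>
              x ∈ S (t r) ∩ (A ∪ cutOp S ((Finset.Icc 1 r).image t) (rq+1))).card := by
      exact_mod_cast key x
    linear_combination hk * (f {x} - f ∅)
  linear_combination hSig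
end
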